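/- Let B = {B_{ab|xy}} be a Bell functional with nonnegative coefficients and ω(B) > 0, and let ρ be a density matrix on ℂ^d ⊗ ℂ^d. Then the largest Bell-inequality violation is bounded by the largest induced steering-inequality violation: LV(ρ, B) ≤ sup over Bob POVM families E_B of LV_s(ρ, F_(B;E_B)), where F_(B;E_B) is the induced steering functional with F_{a|x} = ∑_{b,y} B_{ab|xy} E_{b|y} (the supremum restricted to E_B with ω_s(F_(B;E_B)) > 0). -/

import Mathlib

open scoped ComplexOrder Kronecker Matrix
open MeasureTheory

noncomputable section

namespace QSteer

/-- Square complex matrices indexed by `ι` (the Hilbert space `ℂ^ι`). -/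
abbrev HMat (ι : Type) : Type := Matrix ι ι ℂ

/-- A density matrix: positive semidefinite with unit trace. -/
def IsDensity {ι : Type} [Fintype ι] (ρ : HMat ι) : Prop :=
  ρ.PosSemidef ∧ ρ.trace = 1


section AuxGeneric
lemma trace_nonneg_of_psd {ι : Type} [Fintype ι] {M : HMat ι} (h : M.PosSemidef) :
    0 ≤ M.trace := by
  classical
  refine Finset.sum_nonneg fun i _ => ?_
  have := h.dotProduct_mulVec_nonneg (Pi.single i 1)
  simpa [dotProduct, Matrix.mulVec, Pi.single_apply, Finset.mul_sum, mul_comm] using this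

lemma psd_sum {ι κ : Type} [Fintype ι] (s : Finset κ) (f : κ → HMat ι)
    (h : ∀ k ∈ s, (f k).PosSemidef) : (∑ k ∈ s, f k).PosSemidef := by
  classical
  induction s using Finset.induction_on with
  | empty => simpa using Matrix.PosSemidef.zero
  | insert _ _ hk ih =>
    rw [Finset.sum_insert hk]
    exact ((h _ (Finset.mem_insert_self _ _)).add (ih fun k hks => h k (Finset.mem_insert_of_mem hks)))

section SqrtCompat
open scoped MatrixOrder

def _root_.Matrix.PosSemidef.sqrt {ι : Type} [Fintype ι] [DecidableEq ι] {G : HMat ι}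
    (_hG : G.PosSemidef) : HMat ι := CFC.sqrt G

lemma _root_.Matrix.PosSemidef.sq_sqrt {ι : Type} [Fintype ι] [DecidableEq ι] {G : HMat ι}
    (hG : G.PosSemidef) : hG.sqrt ^ 2 = G := CFC.sq_sqrt G hG.nonneg

lemma _root_.Matrix.PosSemidef.posSemidef_sqrt {ι : Type} [Fintype ι] [DecidableEq ι]
    {G : HMat ι} (hG : G.PosSemidef) : hG.sqrt.PosSemidef :=
  Matrix.nonneg_iff_posSemidef.mp (CFC.sqrt_nonneg G)

end SqrtCompat

lemma trace_mul_nonneg {ι : Type} [Fintype ι] [DecidableEq ι] {F G : HMat ι}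
    (hF : F.PosSemidef) (hG : G.PosSemidef) : 0 ≤ (F * G).trace := by
  have h1 : F * G = F * (hG.sqrt * hG.sqrt) := by
    rw [← pow_two, hG.sq_sqrt]
  rw [h1, ← Matrix.mul_assoc, Matrix.trace_mul_comm]
  have : hG.sqrt * (F * hG.sqrt) = hG.sqrt * F * hG.sqrtᴴ := by
    rw [hG.posSemidef_sqrt.1.eq, mul_assoc]
  rw [this]
  exact trace_nonneg_of_psd (hF.mul_mul_conjTranspose_same hG.sqrt)

lemma trace_mul_re_nonneg {ι : Type} [Fintype ι] [DecidableEq ι] {F G : HMat ι}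
    (hF : F.PosSemidef) (hG : G.PosSemidef) : 0 ≤ ((F * G).trace).re := by
  have := trace_mul_nonneg hF hG
  rw [Complex.le_def] at this
  simpa using this.1


lemma s4 {M : Type*} [AddCommMonoid M] {α β γ δ : Type} [Fintype α] [Fintype β] [Fintype γ]
    [Fintype δ] (f : α → β → γ → δ → M) :
    ∑ a, ∑ b, ∑ c, ∑ d, f a b c d = ∑ c, ∑ b, ∑ d, ∑ a, f a b c d := calc
  ∑ a, ∑ b, ∑ c, ∑ d, f a b c d = ∑ b, ∑ a, ∑ c, ∑ d, f a b c d := Finset.sum_comm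
  _ = ∑ b, ∑ c, ∑ a, ∑ d, f a b c d := Finset.sum_congr rfl fun _ _ => Finset.sum_comm
  _ = ∑ c, ∑ b, ∑ a, ∑ d, f a b c d := Finset.sum_comm
  _ = ∑ c, ∑ b, ∑ d, ∑ a, f a b c d :=
    Finset.sum_congr rfl fun _ _ => Finset.sum_congr rfl fun _ _ => Finset.sum_comm



end AuxGeneric

/-- A POVM family `{E_{a|x}}`: positive semidefinite effects summing to the identity
for every setting `x`. -/
def IsPOVM {ι A X : Type} [Fintype ι] [Fintype A] [DecidableEq ι]
    (E : A → X → HMat ι) : Prop :=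
  (∀ a x, (E a x).PosSemidef) ∧ ∀ x, ∑ a, E a x = 1

/-- A projective measurement family: a POVM family whose effects are orthogonal
projections. -/
def IsProjPOVM {ι A X : Type} [Fintype ι] [Fintype A] [DecidableEq ι]
    (E : A → X → HMat ι) : Prop :=
  IsPOVM E ∧ ∀ a x, (E a x).IsHermitian ∧ E a x * E a x = E a x

/-- An assemblage `{σ_{a|x}}`: positive semidefinite matrices such that `∑_a σ_{a|x}`
is the same unit-trace matrix for every `x`. -/
def IsAssemblage {ι A X : Type} [Fintype ι] [Fintype A] (σ : A → X → HMat ι) : Prop :=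
  (∀ a x, (σ a x).PosSemidef) ∧ (∀ x x', ∑ a, σ a x = ∑ a, σ a x') ∧
    ∀ x, (∑ a, σ a x).trace = 1

/-- An unsteerable assemblage: one admitting a local-hidden-state model. -/
def IsUnsteerable {ι A X : Type} [Fintype ι] [Fintype A] (σ : A → X → HMat ι) : Prop :=
  ∃ (n : ℕ) (w : Fin n → ℝ) (p : A → X → Fin n → ℝ) (τ : Fin n → HMat ι),
    (∀ l, 0 ≤ w l) ∧ (∑ l, w l = 1) ∧
    (∀ a x l, 0 ≤ p a x l) ∧ (∀ x l, ∑ a, p a x l = 1) ∧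
    (∀ l, IsDensity (τ l)) ∧
    ∀ a x, σ a x = ∑ l, (w l * p a x l) • τ l

/-- A steering functional `{F_{a|x}}`: a family of positive semidefinite matrices. -/
def IsSteeringFunctional {ι A X : Type} [Fintype ι] (F : A → X → HMat ι) : Prop :=
  ∀ a x, (F a x).PosSemidef

/-- The value `∑_{a,x} tr(F_{a|x} σ_{a|x})` (real part). -/
def steeringValue {ι A X : Type} [Fintype ι] [Fintype A] [Fintype X]
    (F σ : A → X → HMat ι) : ℝ :=
  ∑ x, ∑ a, ((F a x * σ a x).trace).re

/-- The steering bound `ω_s(F)`. -/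
def steeringBound {ι A X : Type} [Fintype ι] [Fintype A] [Fintype X]
    (F : A → X → HMat ι) : ℝ :=
  sSup {r : ℝ | ∃ σ : A → X → HMat ι, IsAssemblage σ ∧ IsUnsteerable σ ∧
    r = steeringValue F σ}

/-- The steering fraction `Γ_s(σ, F)`. -/
def steeringFraction {ι A X : Type} [Fintype ι] [Fintype A] [Fintype X]
    (σ F : A → X → HMat ι) : ℝ :=
  steeringValue F σ / steeringBound F

/-- Partial trace over the first (Alice's) tensor factor. -/
def ptraceA {ιA ιB : Type} [Fintype ιA] (M : Matrix (ιA × ιB) (ιA × ιB) ℂ) : HMat ιB :=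
  Matrix.of fun j j' => ∑ i, M (i, j) (i, j')


section AuxPtrace
variable {ιA ιB : Type} [Fintype ιA] [Fintype ιB] [DecidableEq ιA] [DecidableEq ιB]

lemma trace_ptraceA (M : Matrix (ιA × ιB) (ιA × ιB) ℂ) : (ptraceA M).trace = M.trace := by
  simp only [Matrix.trace, ptraceA, Matrix.diag, Matrix.of_apply, Fintype.sum_prod_type]
  exact Finset.sum_comm

lemma ptraceA_mul_kron_comm (M : Matrix (ιA × ιB) (ιA × ιB) ℂ) (X : Matrix ιA ιA ℂ) :
    ptraceA (M * (X ⊗ₖ (1 : HMat ιB))) = ptraceA ((X ⊗ₖ (1 : HMat ιB)) * M) := by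
  ext j j'
  simp only [ptraceA, Matrix.of_apply, Matrix.mul_apply, Fintype.sum_prod_type,
    Matrix.kroneckerMap_apply, Matrix.one_apply, mul_ite, ite_mul, mul_zero, zero_mul,
    mul_one, one_mul, Finset.sum_ite_eq', Finset.mem_univ, if_true, Finset.sum_ite_eq]
  rw [Finset.sum_comm]
  exact Finset.sum_congr rfl fun i _ => Finset.sum_congr rfl fun i' _ => mul_comm _ _

lemma trace_mul_ptraceA_kron (M : Matrix (ιA × ιB) (ιA × ιB) ℂ) (E : Matrix ιA ιA ℂ)
    (N : HMat ιB) :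
    (N * ptraceA (M * (E ⊗ₖ (1 : HMat ιB)))).trace = (M * (E ⊗ₖ N)).trace := by
  simp only [Matrix.trace, Matrix.diag, Matrix.mul_apply, ptraceA, Matrix.of_apply,
    Fintype.sum_prod_type, Matrix.kroneckerMap_apply, Matrix.one_apply, mul_ite, ite_mul,
    mul_zero, zero_mul, mul_one, Finset.mul_sum, Finset.sum_ite_eq', Finset.mem_univ, if_true,
    Finset.sum_ite_eq]
  refine (s4 _).trans ?_
  refine Finset.sum_congr rfl fun i2 _ => Finset.sum_congr rfl fun j' _ =>
    Finset.sum_congr rfl fun i _ => Finset.sum_congr rfl fun j _ => ?_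
  ring


lemma quadform_eq_trace {ι : Type} [Fintype ι] (S : HMat ι) (v : ι → ℂ) :
    star v ⬝ᵥ (S *ᵥ v) = (S * Matrix.vecMulVec v (star v)).trace := by
  simp only [Matrix.trace, Matrix.diag, Matrix.mul_apply, Matrix.vecMulVec_apply,
    dotProduct, Matrix.mulVec, Pi.star_apply, Finset.mul_sum]
  exact Finset.sum_congr rfl fun j _ => Finset.sum_congr rfl fun j' _ => by ring

lemma ptraceA_posSemidef {M : Matrix (ιA × ιB) (ιA × ιB) ℂ} (hM : M.PosSemidef) :
    (ptraceA M).PosSemidef := by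
  refine Matrix.PosSemidef.of_dotProduct_mulVec_nonneg ?_ ?_
  · ext j j'
    simp only [Matrix.conjTranspose_apply, ptraceA, Matrix.of_apply, star_sum]
    exact Finset.sum_congr rfl fun i _ => hM.1.apply (i, j) (i, j')
  · intro v
    set W : HMat ιB := Matrix.vecMulVec v (star v) with hW
    set K : Matrix (ιA × ιB) ιA ℂ := Matrix.of fun p i => if p.1 = i then v p.2 else 0 with hKdef
    have hform := quadform_eq_trace (ptraceA M) v
    have hM1 : M * ((1 : Matrix ιA ιA ℂ) ⊗ₖ (1 : HMat ιB)) = M := by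
      rw [Matrix.one_kronecker_one, mul_one]
    have h2 : (W * ptraceA M).trace = (M * ((1 : Matrix ιA ιA ℂ) ⊗ₖ W)).trace := by
      conv_lhs => rw [← hM1]
      exact trace_mul_ptraceA_kron M 1 W
    have hK : (1 : Matrix ιA ιA ℂ) ⊗ₖ W = K * Kᴴ := by
      ext ⟨i, j⟩ ⟨i', j'⟩
      simp only [Matrix.kroneckerMap_apply, Matrix.one_apply, Matrix.mul_apply,
        Matrix.conjTranspose_apply, hKdef, Matrix.of_apply, hW, Matrix.vecMulVec_apply,
        Pi.star_apply, apply_ite star, star_zero, mul_ite, ite_mul, zero_mul, mul_zero,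
        Finset.sum_ite_eq, Finset.mem_univ, if_true]
      by_cases h : i = i' <;> simp [h, eq_comm]
    have h3 : (M * ((1 : Matrix ιA ιA ℂ) ⊗ₖ W)).trace = (Kᴴ * M * K).trace := by
      rw [hK, ← Matrix.mul_assoc, Matrix.trace_mul_comm, ← Matrix.mul_assoc]
    rw [hform, Matrix.trace_mul_comm, h2, h3]
    exact trace_nonneg_of_psd (hM.conjTranspose_mul_mul_same K)

end AuxPtrace

/-- The assemblage induced by a bipartite state and Alice's POVMs:
`σ_{a|x} = Tr_A[ρ (E_{a|x} ⊗ I)]`. -/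
def inducedAssemblage {ιA ιB A X : Type} [Fintype ιA] [Fintype ιB] [DecidableEq ιB]
    (ρ : Matrix (ιA × ιB) (ιA × ιB) ℂ) (E : A → X → HMat ιA) : A → X → HMat ιB :=
  fun a x => ptraceA (ρ * ((E a x) ⊗ₖ (1 : HMat ιB)))

/-- Largest steering-inequality violation `LV_s(ρ, F)` over Alice POVM families. -/
def LVs {ιA ιB A X : Type} [Fintype ιA] [Fintype ιB] [DecidableEq ιA] [DecidableEq ιB]
    [Fintype A] [Fintype X]
    (ρ : Matrix (ιA × ιB) (ιA × ιB) ℂ) (F : A → X → HMat ιB) : ℝ :=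
  sSup {r : ℝ | ∃ E : A → X → HMat ιA, IsPOVM E ∧
    r = steeringFraction (inducedAssemblage ρ E) F}

/-- Largest steering-inequality violation `LV_s^π(ρ, F)` over projective Alice families. -/
def LVsProj {ιA ιB A X : Type} [Fintype ιA] [Fintype ιB] [DecidableEq ιA] [DecidableEq ιB]
    [Fintype A] [Fintype X]
    (ρ : Matrix (ιA × ιB) (ιA × ιB) ℂ) (F : A → X → HMat ιB) : ℝ :=
  sSup {r : ℝ | ∃ E : A → X → HMat ιA, IsProjPOVM E ∧
    r = steeringFraction (inducedAssemblage ρ E) F}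

/-- The maximally entangled state `|Ψ⁺⟩⟨Ψ⁺|` on `ℂ^ι ⊗ ℂ^ι`. -/
def maxEnt (ι : Type) [Fintype ι] [DecidableEq ι] : Matrix (ι × ι) (ι × ι) ℂ :=
  Matrix.of fun pq rs => if pq.1 = pq.2 ∧ rs.1 = rs.2 then ((Fintype.card ι : ℂ))⁻¹ else 0

/-- The fully entangled fraction `F(ρ) = sup_U ⟨Ψ⁺|(U ⊗ I) ρ (U ⊗ I)†|Ψ⁺⟩`. -/
def fef {ι : Type} [Fintype ι] [DecidableEq ι] (ρ : Matrix (ι × ι) (ι × ι) ℂ) : ℝ :=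
  sSup {r : ℝ | ∃ U : Matrix ι ι ℂ, U ∈ Matrix.unitaryGroup ι ℂ ∧
    r = ((maxEnt ι * ((U ⊗ₖ (1 : HMat ι)) * ρ * ((U ⊗ₖ (1 : HMat ι))ᴴ))).trace).re}

/-- A local-hidden-variable (Bell-local) correlation. -/
def IsLHV {A B X Y : Type} [Fintype A] [Fintype B] (P : A → B → X → Y → ℝ) : Prop :=
  ∃ (n : ℕ) (w : Fin n → ℝ) (pA : A → X → Fin n → ℝ) (pB : B → Y → Fin n → ℝ),
    (∀ l, 0 ≤ w l) ∧ (∑ l, w l = 1) ∧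
    (∀ a x l, 0 ≤ pA a x l) ∧ (∀ x l, ∑ a, pA a x l = 1) ∧
    (∀ b y l, 0 ≤ pB b y l) ∧ (∀ y l, ∑ b, pB b y l = 1) ∧
    ∀ a b x y, P a b x y = ∑ l, w l * pA a x l * pB b y l

/-- The Bell value `∑ B_{ab|xy} P(a,b|x,y)`. -/
def bellValue {A B X Y : Type} [Fintype A] [Fintype B] [Fintype X] [Fintype Y]
    (Bf P : A → B → X → Y → ℝ) : ℝ :=
  ∑ x, ∑ y, ∑ a, ∑ b, Bf a b x y * P a b x y

/-- The local bound `ω(B)`. -/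
def localBound {A B X Y : Type} [Fintype A] [Fintype B] [Fintype X] [Fintype Y]
    (Bf : A → B → X → Y → ℝ) : ℝ :=
  sSup {r : ℝ | ∃ P : A → B → X → Y → ℝ, IsLHV P ∧ r = bellValue Bf P}

/-- The nonlocality fraction `Γ(P, B)`. -/
def nonlocalityFraction {A B X Y : Type} [Fintype A] [Fintype B] [Fintype X] [Fintype Y]
    (P Bf : A → B → X → Y → ℝ) : ℝ :=
  bellValue Bf P / localBound Bf

/-- The quantum correlation `P(a,b|x,y) = tr[ρ (E_{a|x} ⊗ E_{b|y})]`. -/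
def quantumCorr {ιA ιB A B X Y : Type} [Fintype ιA] [Fintype ιB]
    (ρ : Matrix (ιA × ιB) (ιA × ιB) ℂ) (EA : A → X → HMat ιA) (EB : B → Y → HMat ιB) :
    A → B → X → Y → ℝ :=
  fun a b x y => ((ρ * ((EA a x) ⊗ₖ (EB b y))).trace).re

/-- Largest Bell-inequality violation `LV(ρ, B)` over pairs of POVM families. -/
def LV {ιA ιB A B X Y : Type} [Fintype ιA] [Fintype ιB] [DecidableEq ιA] [DecidableEq ιB]
    [Fintype A] [Fintype B] [Fintype X] [Fintype Y]
    (ρ : Matrix (ιA × ιB) (ιA × ιB) ℂ) (Bf : A → B → X → Y → ℝ) : ℝ :=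
  sSup {r : ℝ | ∃ (EA : A → X → HMat ιA) (EB : B → Y → HMat ιB),
    IsPOVM EA ∧ IsPOVM EB ∧ r = nonlocalityFraction (quantumCorr ρ EA EB) Bf}

/-- Largest Bell-inequality violation `LV^π(ρ, B)` over pairs of projective families. -/
def LVProj {ιA ιB A B X Y : Type} [Fintype ιA] [Fintype ιB] [DecidableEq ιA] [DecidableEq ιB]
    [Fintype A] [Fintype B] [Fintype X] [Fintype Y]
    (ρ : Matrix (ιA × ιB) (ιA × ιB) ℂ) (Bf : A → B → X → Y → ℝ) : ℝ :=
  sSup {r : ℝ | ∃ (EA : A → X → HMat ιA) (EB : B → Y → HMat ιB),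
    IsProjPOVM EA ∧ IsProjPOVM EB ∧ r = nonlocalityFraction (quantumCorr ρ EA EB) Bf}

/-- The steering functional induced by a Bell functional and Bob's POVMs:
`F_{a|x} = ∑_{b,y} B_{ab|xy} E_{b|y}`. -/
def inducedF {ιB A B X Y : Type} [Fintype B] [Fintype Y]
    (Bf : A → B → X → Y → ℝ) (EB : B → Y → HMat ιB) : A → X → HMat ιB :=
  fun a x => ∑ y, ∑ b, Bf a b x y • EB b y

/-- The `k`-fold tensor power of a bipartite state, regrouped as a bipartite state on
`ℂ^{d^k} ⊗ ℂ^{d^k}` (Alice's factors grouped together, likewise Bob's). -/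
def tensorPower {ι : Type} (ρ : Matrix (ι × ι) (ι × ι) ℂ) (k : ℕ) :
    Matrix ((Fin k → ι) × (Fin k → ι)) ((Fin k → ι) × (Fin k → ι)) ℂ :=
  Matrix.of fun p q => ∏ t, ρ (p.1 t, p.2 t) (q.1 t, q.2 t)

/-- The isotropic state `ρ_iso(p) = p |Ψ⁺⟩⟨Ψ⁺| + (1-p) I/d²` on `ℂ^d ⊗ ℂ^d`. -/
def iso (d : ℕ) (p : ℝ) : Matrix (Fin d × Fin d) (Fin d × Fin d) ℂ :=
  p • maxEnt (Fin d) + ((1 - p) / (d : ℝ) ^ 2) • (1 : Matrix (Fin d × Fin d) (Fin d × Fin d) ℂ)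

/-- `sup_F Γ_s(σ, F)` over positive semidefinite steering functionals with positive
steering bound. -/
def supFrac {ι A X : Type} [Fintype ι] [Fintype A] [Fintype X] (σ : A → X → HMat ι) : ℝ :=
  sSup {r : ℝ | ∃ F : A → X → HMat ι, IsSteeringFunctional F ∧ 0 < steeringBound F ∧
    r = steeringFraction σ F}

/-- The optimal steering fraction `S_O(σ) = max{0, sup_F Γ_s(σ, F) − 1}`. -/
def SO {ι A X : Type} [Fintype ι] [Fintype A] [Fintype X] (σ : A → X → HMat ι) : ℝ :=
  max 0 (supFrac σ - 1)

/-- The steerable weight `S_W(σ)`. -/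
def SW {ι A X : Type} [Fintype ι] [Fintype A] [Fintype X] (σ : A → X → HMat ι) : ℝ :=
  sInf {ν : ℝ | 0 ≤ ν ∧ ν ≤ 1 ∧ ∃ σUS σS : A → X → HMat ι,
    IsAssemblage σUS ∧ IsUnsteerable σUS ∧ IsAssemblage σS ∧
    ∀ a x, σ a x = (1 - ν) • σUS a x + ν • σS a x}

/-- The steering robustness `S_R(σ)`. -/
def SR {ι A X : Type} [Fintype ι] [Fintype A] [Fintype X] (σ : A → X → HMat ι) : ℝ :=
  sInf {ν : ℝ | 0 ≤ ν ∧ ∃ τ : A → X → HMat ι, IsAssemblage τ ∧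
    IsUnsteerable (fun a x => (1 / (1 + ν)) • σ a x + (ν / (1 + ν)) • τ a x)}

/-- Separability of a bipartite state. -/
def IsSeparable {ιA ιB : Type} [Fintype ιA] [Fintype ιB]
    (ρ : Matrix (ιA × ιB) (ιA × ιB) ℂ) : Prop :=
  ∃ (n : ℕ) (w : Fin n → ℝ) (ρA : Fin n → HMat ιA) (ρB : Fin n → HMat ιB),
    (∀ l, 0 ≤ w l) ∧ (∑ l, w l = 1) ∧ (∀ l, IsDensity (ρA l)) ∧ (∀ l, IsDensity (ρB l)) ∧
    ρ = ∑ l, w l • ((ρA l) ⊗ₖ (ρB l))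

/-- The (unnormalized) output assemblage of a one-way LOCC subchannel acting on an
assemblage: `M(σ)_{a'|x'} = K (∑_{a,x} P(x|x') P(a'|x',a,x) σ_{a|x}) K†`. -/
def wired {ι ι₂ A X A' X' : Type} [Fintype ι] [Fintype A] [Fintype X]
    (K : Matrix ι₂ ι ℂ) (Px : X → X' → ℝ) (Pa : A' → X' → A → X → ℝ)
    (σ : A → X → HMat ι) : A' → X' → HMat ι₂ :=
  fun a' x' => K * (∑ x, ∑ a, (Px x x' * Pa a' x' a x) • σ a x) * Kᴴ

instance matMeasurableSpace {m n : Type} : MeasurableSpace (Matrix m n ℂ) :=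
  inferInstanceAs (MeasurableSpace (m → n → ℂ))

/-- The `(U ⊗ U*)`-twirl of a bipartite state with respect to a measure `μ` on the
unitary group (entrywise Bochner integral). -/
def twirl {ι : Type} [Fintype ι] [DecidableEq ι]
    (μ : Measure (Matrix.unitaryGroup ι ℂ)) (ρ : Matrix (ι × ι) (ι × ι) ℂ) :
    Matrix (ι × ι) (ι × ι) ℂ :=
  Matrix.of fun p q =>
    ∫ V : Matrix.unitaryGroup ι ℂ,
      ((((V : Matrix ι ι ℂ)) ⊗ₖ ((V : Matrix ι ι ℂ).map (starRingEnd ℂ))) * ρ *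
        ((((V : Matrix ι ι ℂ)) ⊗ₖ ((V : Matrix ι ι ℂ).map (starRingEnd ℂ)))ᴴ)) p q ∂μ


section AuxHigh

variable {ι A B X Y : Type} [Fintype ι] [DecidableEq ι] [Fintype A] [Fintype B]
  [Fintype X] [Fintype Y]

lemma psd_smul_real {r : ℝ} (hr : 0 ≤ r) {M : HMat ι} (hM : M.PosSemidef) :
    (r • M).PosSemidef := by
  refine Matrix.PosSemidef.of_dotProduct_mulVec_nonneg ?_ ?_
  · ext i j
    simp only [Matrix.conjTranspose_apply, Matrix.smul_apply, star_smul, star_trivial]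
    rw [hM.1.apply]
  · intro v
    rw [Matrix.smul_mulVec, dotProduct_smul]
    have : r • (star v ⬝ᵥ M *ᵥ v) = (r : ℂ) * (star v ⬝ᵥ M *ᵥ v) := by
      rw [Complex.real_smul]
    rw [this]
    exact mul_nonneg (by exact_mod_cast Complex.zero_le_real.mpr hr) (hM.dotProduct_mulVec_nonneg v)

/-- Expansion of the induced steering functional against any matrix. -/
lemma inducedF_mul_trace_re (Bf : A → B → X → Y → ℝ) (EB : B → Y → HMat ι)
    (S : HMat ι) (a : A) (x : X) :
    (((inducedF Bf EB a x) * S).trace).re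
      = ∑ y, ∑ b, Bf a b x y * (((EB b y) * S).trace).re := by
  simp only [inducedF, Matrix.sum_mul, Matrix.smul_mul, Matrix.trace_sum, Matrix.trace_smul,
    Complex.re_sum, Complex.smul_re, smul_eq_mul]

/-- PSD components of the induced steering functional. -/
lemma inducedF_psd (Bf : A → B → X → Y → ℝ) (hBf : ∀ a b x y, 0 ≤ Bf a b x y)
    {EB : B → Y → HMat ι} (hEB : ∀ b y, (EB b y).PosSemidef) (a : A) (x : X) :
    (inducedF Bf EB a x).PosSemidef := by
  refine psd_sum _ _ fun y _ => psd_sum _ _ fun b _ => ?_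
  exact psd_smul_real (hBf a b x y) (hEB b y)

/-- Conjugate transpose of `X ⊗ₖ 1`. -/
lemma kron_one_conjTranspose (S : HMat ι) {ι' : Type} [Fintype ι'] [DecidableEq ι'] :
    (S ⊗ₖ (1 : HMat ι'))ᴴ = Sᴴ ⊗ₖ (1 : HMat ι') := by
  ext p q
  simp [Matrix.conjTranspose_apply, Matrix.kroneckerMap_apply, Matrix.one_apply, star_mul',
    apply_ite star, eq_comm]

/-- Each member of the induced assemblage is PSD. -/
lemma inducedAssemblage_psd {ι' : Type} [Fintype ι'] [DecidableEq ι']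
    {ρ : Matrix (ι' × ι) (ι' × ι) ℂ} (hρ : ρ.PosSemidef)
    {EA : A → X → HMat ι'} (hEA : ∀ a x, (EA a x).PosSemidef) (a : A) (x : X) :
    (inducedAssemblage ρ EA a x).PosSemidef := by
  set S := (hEA a x).sqrt with hS
  have hSh : S.IsHermitian := (hEA a x).posSemidef_sqrt.1
  have hSS : S * S = EA a x := by
    have := (hEA a x).sq_sqrt
    rwa [pow_two] at this
  have h1 : ρ * (EA a x ⊗ₖ (1 : HMat ι)) = ρ * ((S ⊗ₖ (1 : HMat ι)) * (S ⊗ₖ (1 : HMat ι))) := by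
    rw [← Matrix.mul_kronecker_mul, hSS, one_mul]
  have h2 : inducedAssemblage ρ EA a x
      = ptraceA ((S ⊗ₖ (1 : HMat ι)) * ρ * (S ⊗ₖ (1 : HMat ι))) := by
    rw [inducedAssemblage, h1, ← Matrix.mul_assoc, ptraceA_mul_kron_comm, ← Matrix.mul_assoc]
  rw [h2]
  have h3 : (S ⊗ₖ (1 : HMat ι)) * ρ * (S ⊗ₖ (1 : HMat ι))
      = (S ⊗ₖ (1 : HMat ι)) * ρ * (S ⊗ₖ (1 : HMat ι))ᴴ := by
    rw [kron_one_conjTranspose, hSh.eq]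
  rw [h3]
  exact ptraceA_posSemidef (hρ.mul_mul_conjTranspose_same _)

/-- The induced assemblage sums to the reduced state. -/
lemma inducedAssemblage_sum {ι' : Type} [Fintype ι'] [DecidableEq ι']
    (ρ : Matrix (ι' × ι) (ι' × ι) ℂ) {EA : A → X → HMat ι'} (hEA : IsPOVM EA) (x : X) :
    ∑ a, inducedAssemblage ρ EA a x = ptraceA ρ := by
  have h1 : ∑ a, ρ * (EA a x ⊗ₖ (1 : HMat ι)) = ρ * ((∑ a, EA a x) ⊗ₖ (1 : HMat ι)) := by
    rw [← Finset.mul_sum]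
    congr 1
    ext p q
    simp [Matrix.sum_apply, Matrix.kroneckerMap_apply, Finset.sum_mul]
  have h2 : ∑ a, inducedAssemblage ρ EA a x = ptraceA (∑ a, ρ * (EA a x ⊗ₖ (1 : HMat ι))) := by
    ext j j'
    simp only [Matrix.sum_apply, inducedAssemblage, ptraceA, Matrix.of_apply]
    exact Finset.sum_comm
  rw [h2, h1, hEA.2, Matrix.one_kronecker_one, mul_one]

/-- The reduced state of a density matrix is a density matrix. -/
lemma ptraceA_density {ι' : Type} [Fintype ι'] [DecidableEq ι'] {ρ : Matrix (ι' × ι) (ι' × ι) ℂ}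
    (hρ : IsDensity ρ) : IsDensity (ptraceA ρ) :=
  ⟨ptraceA_posSemidef hρ.1, by rw [trace_ptraceA]; exact hρ.2⟩

/-- Bell value equals the induced steering value. -/
lemma steeringValue_inducedF {ι' : Type} [Fintype ι'] [DecidableEq ι']
    (ρ : Matrix (ι' × ι) (ι' × ι) ℂ) (Bf : A → B → X → Y → ℝ)
    (EA : A → X → HMat ι') (EB : B → Y → HMat ι) :
    steeringValue (inducedF Bf EB) (inducedAssemblage ρ EA)
      = bellValue Bf (quantumCorr ρ EA EB) := by
  unfold steeringValue bellValue quantumCorr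
  refine Finset.sum_congr rfl fun x _ => ?_
  have h1 : ∀ a : A, (((inducedF Bf EB a x) * (inducedAssemblage ρ EA a x)).trace).re
      = ∑ y, ∑ b, Bf a b x y * ((ρ * (EA a x ⊗ₖ EB b y)).trace).re := by
    intro a
    rw [inducedF_mul_trace_re]
    refine Finset.sum_congr rfl fun y _ => Finset.sum_congr rfl fun b _ => ?_
    rw [inducedAssemblage, trace_mul_ptraceA_kron]
  simp only [h1]
  exact Finset.sum_comm

lemma steeringValue_nonneg {F σ : A → X → HMat ι} (hF : ∀ a x, (F a x).PosSemidef)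
    (hσ : ∀ a x, (σ a x).PosSemidef) : 0 ≤ steeringValue F σ :=
  Finset.sum_nonneg fun x _ => Finset.sum_nonneg fun a _ =>
    trace_mul_re_nonneg (hF a x) (hσ a x)

/-- The steering value of an induced assemblage is at most `∑ tr(F_{a|x} ρ_B)`. -/
lemma steeringValue_induced_le_W {ι' : Type} [Fintype ι'] [DecidableEq ι']
    {ρ : Matrix (ι' × ι) (ι' × ι) ℂ} (hρ : ρ.PosSemidef)
    {EA : A → X → HMat ι'} (hEA : IsPOVM EA) {F : A → X → HMat ι}
    (hF : ∀ a x, (F a x).PosSemidef) :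
    steeringValue F (inducedAssemblage ρ EA)
      ≤ ∑ x, ∑ a, ((F a x * ptraceA ρ).trace).re := by
  classical
  refine Finset.sum_le_sum fun x _ => Finset.sum_le_sum fun a _ => ?_
  have hdiff : (ptraceA ρ - inducedAssemblage ρ EA a x).PosSemidef := by
    have h1 : ptraceA ρ - inducedAssemblage ρ EA a x
        = ∑ a' ∈ Finset.univ.erase a, inducedAssemblage ρ EA a' x := by
      rw [← inducedAssemblage_sum ρ hEA x, ← Finset.add_sum_erase _ _ (Finset.mem_univ a)]
      exact add_sub_cancel_left _ _
    rw [h1]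
    exact psd_sum _ _ fun a' _ => inducedAssemblage_psd hρ hEA.1 a' x
  have h2 : 0 ≤ ((F a x * (ptraceA ρ - inducedAssemblage ρ EA a x)).trace).re :=
    trace_mul_re_nonneg (hF a x) hdiff
  rw [Matrix.mul_sub, Matrix.trace_sub, Complex.sub_re] at h2
  linarith

/-- Lower bound on the steering bound from the uniform unsteerable assemblage. -/
lemma uniform_le_steeringBound [Nonempty A] (F : A → X → HMat ι) {τ : HMat ι}
    (hτ : IsDensity τ)
    (hBdd : BddAbove {r : ℝ | ∃ σ : A → X → HMat ι, IsAssemblage σ ∧ IsUnsteerable σ ∧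
      r = steeringValue F σ}) :
    (Fintype.card A : ℝ)⁻¹ * (∑ x, ∑ a, ((F a x * τ).trace).re) ≤ steeringBound F := by
  set c : ℝ := (Fintype.card A : ℝ)⁻¹ with hc
  have hcard : (Fintype.card A : ℝ) ≠ 0 := Nat.cast_ne_zero.mpr Fintype.card_ne_zero
  have hc0 : 0 ≤ c := inv_nonneg.mpr (Nat.cast_nonneg _)
  set σ' : A → X → HMat ι := fun _ _ => c • τ with hσ'
  have hsum : ∀ x : X, ∑ _a : A, c • τ = τ := by
    intro x
    rw [Finset.sum_const, Finset.card_univ, ← Nat.cast_smul_eq_nsmul ℝ, smul_smul,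
      mul_inv_cancel₀ hcard, one_smul]
  have hassem : IsAssemblage σ' := by
    refine ⟨fun a x => psd_smul_real hc0 hτ.1, fun x x' => rfl, fun x => ?_⟩
    rw [hsum x]; exact hτ.2
  have hunst : IsUnsteerable σ' := by
    refine ⟨1, fun _ => 1, fun _ _ _ => c, fun _ => τ, fun _ => zero_le_one, by simp,
      fun _ _ _ => hc0, fun _ _ => ?_, fun _ => hτ, fun a x => by simp [hσ']⟩
    rw [Finset.sum_const, Finset.card_univ, nsmul_eq_mul, mul_inv_cancel₀ hcard]
  have hval : steeringValue F σ' = c * ∑ x, ∑ a, ((F a x * τ).trace).re := by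
    unfold steeringValue
    rw [Finset.mul_sum]
    refine Finset.sum_congr rfl fun x _ => ?_
    rw [Finset.mul_sum]
    refine Finset.sum_congr rfl fun a _ => ?_
    rw [hσ', mul_smul_comm, Matrix.trace_smul, Complex.smul_re, smul_eq_mul]
  have hmem : steeringValue F σ' ∈ {r : ℝ | ∃ σ : A → X → HMat ι, IsAssemblage σ ∧
      IsUnsteerable σ ∧ r = steeringValue F σ} := ⟨σ', hassem, hunst, rfl⟩
  have := le_csSup hBdd hmem
  rwa [hval] at this

lemma assemblage_trace_re_bounds {σ : A → X → HMat ι} (hσ : IsAssemblage σ) (a : A) (x : X) :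
    0 ≤ ((σ a x).trace).re ∧ ((σ a x).trace).re ≤ 1 := by
  have hnn : ∀ a' : A, 0 ≤ ((σ a' x).trace).re := fun a' => by
    have := trace_nonneg_of_psd (hσ.1 a' x)
    rw [Complex.le_def] at this
    simpa using this.1
  have hsum : ∑ a', ((σ a' x).trace).re = 1 := by
    have h1 : (∑ a', σ a' x).trace = 1 := hσ.2.2 x
    rw [Matrix.trace_sum] at h1
    have := congrArg Complex.re h1
    rwa [Complex.re_sum, Complex.one_re] at this
  exact ⟨hnn a, by
    calc ((σ a x).trace).re ≤ ∑ a', ((σ a' x).trace).re :=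
      Finset.single_le_sum (fun a' _ => hnn a') (Finset.mem_univ a)
    _ = 1 := hsum⟩

lemma povm_trace_le {E : B → Y → HMat ι} (hE : IsPOVM E) {S : HMat ι} (hS : S.PosSemidef)
    (b : B) (y : Y) : ((E b y * S).trace).re ≤ (S.trace).re := by
  classical
  have hrest : ((1 : HMat ι) - E b y).PosSemidef := by
    have h1 : (1 : HMat ι) - E b y = ∑ b' ∈ Finset.univ.erase b, E b' y := by
      rw [← hE.2 y, ← Finset.add_sum_erase _ _ (Finset.mem_univ b)]
      exact add_sub_cancel_left _ _
    rw [h1]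
    exact psd_sum _ _ fun b' _ => hE.1 b' y
  have h2 : 0 ≤ ((((1 : HMat ι) - E b y) * S).trace).re := trace_mul_re_nonneg hrest hS
  rw [Matrix.sub_mul, one_mul, Matrix.trace_sub, Complex.sub_re] at h2
  linarith

lemma lhv_bounds {P : A → B → X → Y → ℝ} (hP : IsLHV P) (a : A) (b : B) (x : X) (y : Y) :
    0 ≤ P a b x y ∧ P a b x y ≤ 1 := by
  obtain ⟨n, w, pA, pB, hw0, hw1, hpA0, hpA1, hpB0, hpB1, hPeq⟩ := hP
  have hpAle : ∀ a x l, pA a x l ≤ 1 := fun a x l => by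
    calc pA a x l ≤ ∑ a', pA a' x l :=
      Finset.single_le_sum (fun a' _ => hpA0 a' x l) (Finset.mem_univ a)
    _ = 1 := hpA1 x l
  have hpBle : ∀ b y l, pB b y l ≤ 1 := fun b y l => by
    calc pB b y l ≤ ∑ b', pB b' y l :=
      Finset.single_le_sum (fun b' _ => hpB0 b' y l) (Finset.mem_univ b)
    _ = 1 := hpB1 y l
  rw [hPeq]
  constructor
  · exact Finset.sum_nonneg fun l _ =>
      mul_nonneg (mul_nonneg (hw0 l) (hpA0 a x l)) (hpB0 b y l)
  · have hterm : ∀ l, w l * pA a x l * pB b y l ≤ w l := by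
      intro l
      have h1 : w l * pA a x l ≤ w l := mul_le_of_le_one_right (hw0 l) (hpAle a x l)
      have h2 : w l * pA a x l * pB b y l ≤ w l * pA a x l :=
        mul_le_of_le_one_right (mul_nonneg (hw0 l) (hpA0 a x l)) (hpBle b y l)
      linarith
    calc ∑ l, w l * pA a x l * pB b y l ≤ ∑ l, w l :=
      Finset.sum_le_sum fun l _ => hterm l
    _ = 1 := hw1

lemma bellValue_le_C {Bf : A → B → X → Y → ℝ} (hBf : ∀ a b x y, 0 ≤ Bf a b x y)
    {P : A → B → X → Y → ℝ} (hP0 : ∀ a b x y, 0 ≤ P a b x y)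
    (hP1 : ∀ a b x y, P a b x y ≤ 1) :
    bellValue Bf P ≤ ∑ x, ∑ y, ∑ a, ∑ b, Bf a b x y := by
  refine Finset.sum_le_sum fun x _ => Finset.sum_le_sum fun y _ =>
    Finset.sum_le_sum fun a _ => Finset.sum_le_sum fun b _ => ?_
  exact mul_le_of_le_one_right (hBf a b x y) (hP1 a b x y)

lemma bddAbove_localBound_set {Bf : A → B → X → Y → ℝ} (hBf : ∀ a b x y, 0 ≤ Bf a b x y) :
    BddAbove {r : ℝ | ∃ P : A → B → X → Y → ℝ, IsLHV P ∧ r = bellValue Bf P} := by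
  refine ⟨∑ x, ∑ y, ∑ a, ∑ b, Bf a b x y, fun r hr => ?_⟩
  obtain ⟨P, hP, rfl⟩ := hr
  exact bellValue_le_C hBf (fun a b x y => (lhv_bounds hP a b x y).1)
    (fun a b x y => (lhv_bounds hP a b x y).2)

/-- Expansion of the steering value of the induced functional. -/
lemma steeringValue_inducedF_expand (Bf : A → B → X → Y → ℝ) (EB : B → Y → HMat ι)
    (σ : A → X → HMat ι) :
    steeringValue (inducedF Bf EB) σ
      = ∑ x, ∑ a, ∑ y, ∑ b, Bf a b x y * (((EB b y) * σ a x).trace).re := by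
  unfold steeringValue
  exact Finset.sum_congr rfl fun x _ => Finset.sum_congr rfl fun a _ =>
    inducedF_mul_trace_re Bf EB (σ a x) a x

lemma bddAbove_steeringBound_set_inducedF {Bf : A → B → X → Y → ℝ}
    (hBf : ∀ a b x y, 0 ≤ Bf a b x y) {EB : B → Y → HMat ι} (hEB : IsPOVM EB) :
    BddAbove {r : ℝ | ∃ σ : A → X → HMat ι, IsAssemblage σ ∧ IsUnsteerable σ ∧
      r = steeringValue (inducedF Bf EB) σ} := by
  refine ⟨∑ x, ∑ a, ∑ y, ∑ b, Bf a b x y, fun r hr => ?_⟩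
  obtain ⟨σ, hσ, _, rfl⟩ := hr
  rw [steeringValue_inducedF_expand]
  refine Finset.sum_le_sum fun x _ => Finset.sum_le_sum fun a _ =>
    Finset.sum_le_sum fun y _ => Finset.sum_le_sum fun b _ => ?_
  refine mul_le_of_le_one_right (hBf a b x y) ?_
  calc (((EB b y) * σ a x).trace).re ≤ ((σ a x).trace).re :=
    povm_trace_le hEB (hσ.1 a x) b y
  _ ≤ 1 := (assemblage_trace_re_bounds hσ a x).2

lemma steeringBound_le_localBound {Bf : A → B → X → Y → ℝ}
    (hBf : ∀ a b x y, 0 ≤ Bf a b x y) (hω : 0 ≤ localBound Bf)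
    {EB : B → Y → HMat ι} (hEB : IsPOVM EB) :
    steeringBound (inducedF Bf EB) ≤ localBound Bf := by
  refine Real.sSup_le (fun r hr => ?_) hω
  obtain ⟨σ, hσA, hσU, rfl⟩ := hr
  obtain ⟨n, w, p, τ, hw0, hw1, hp0, hp1, hτ, hσeq⟩ := hσU
  set pB : B → Y → Fin n → ℝ := fun b y l => (((EB b y) * τ l).trace).re with hpB
  set P : A → B → X → Y → ℝ := fun a b x y => ∑ l, w l * p a x l * pB b y l with hP
  have hpB0 : ∀ b y l, 0 ≤ pB b y l := fun b y l => trace_mul_re_nonneg (hEB.1 b y) (hτ l).1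
  have hpB1 : ∀ y l, ∑ b, pB b y l = 1 := by
    intro y l
    have h1 : ∑ b, ((EB b y) * τ l) = τ l := by
      rw [← Matrix.sum_mul, hEB.2 y, one_mul]
    have h2 : (∑ b, ((EB b y) * τ l)).trace = 1 := by rw [h1]; exact (hτ l).2
    rw [Matrix.trace_sum] at h2
    have := congrArg Complex.re h2
    rwa [Complex.re_sum, Complex.one_re] at this
  have hlhv : IsLHV P := ⟨n, w, p, pB, hw0, hw1, hp0, hp1, hpB0, hpB1, fun _ _ _ _ => rfl⟩
  have hval : steeringValue (inducedF Bf EB) σ = bellValue Bf P := by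
    rw [steeringValue_inducedF_expand]
    unfold bellValue
    refine Finset.sum_congr rfl fun x _ => ?_
    rw [Finset.sum_comm]
    refine Finset.sum_congr rfl fun y _ => Finset.sum_congr rfl fun a _ =>
      Finset.sum_congr rfl fun b _ => ?_
    congr 1
    rw [hσeq a x, Matrix.mul_sum]
    rw [Matrix.trace_sum, Complex.re_sum]
    refine Finset.sum_congr rfl fun l _ => ?_
    rw [mul_smul_comm, Matrix.trace_smul, Complex.smul_re, smul_eq_mul]
  rw [hval]
  exact le_csSup (bddAbove_localBound_set hBf) ⟨P, hlhv, rfl⟩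

lemma exists_pos_coeff [Nonempty A] [Nonempty B] [Nonempty X] [Nonempty Y]
    {Bf : A → B → X → Y → ℝ} (hBf : ∀ a b x y, 0 ≤ Bf a b x y)
    (hω : 0 < localBound Bf) : ∃ a b x y, 0 < Bf a b x y := by
  by_contra h
  push_neg at h
  have hz : ∀ a b x y, Bf a b x y = 0 := fun a b x y =>
    le_antisymm (h a b x y) (hBf a b x y)
  have : localBound Bf ≤ 0 := by
    refine Real.sSup_le (fun r hr => ?_) le_rfl
    obtain ⟨P, _, rfl⟩ := hr
    unfold bellValue
    simp [hz]
  linarith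

lemma induced_fraction_le_card [Nonempty A] {ι' : Type} [Fintype ι'] [DecidableEq ι']
    {ρ : Matrix (ι' × ι) (ι' × ι) ℂ} (hρ : IsDensity ρ)
    {Bf : A → B → X → Y → ℝ} (hBf : ∀ a b x y, 0 ≤ Bf a b x y)
    {EB : B → Y → HMat ι} (hEB : IsPOVM EB)
    (hs : 0 < steeringBound (inducedF Bf EB))
    {EA : A → X → HMat ι'} (hEA : IsPOVM EA) :
    steeringFraction (inducedAssemblage ρ EA) (inducedF Bf EB) ≤ (Fintype.card A : ℝ) := by
  set F := inducedF Bf EB with hFdef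
  have hF : ∀ a x, (F a x).PosSemidef := inducedF_psd Bf hBf hEB.1
  have hW1 : steeringValue F (inducedAssemblage ρ EA)
      ≤ ∑ x, ∑ a, ((F a x * ptraceA ρ).trace).re :=
    steeringValue_induced_le_W hρ.1 hEA hF
  have hW2 : (Fintype.card A : ℝ)⁻¹ * (∑ x, ∑ a, ((F a x * ptraceA ρ).trace).re)
      ≤ steeringBound F :=
    uniform_le_steeringBound F (ptraceA_density hρ)
      (bddAbove_steeringBound_set_inducedF hBf hEB)
  have hcard : (0 : ℝ) < (Fintype.card A : ℝ) := by
    exact_mod_cast Fintype.card_pos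
  rw [steeringFraction, div_le_iff₀ hs]
  calc steeringValue F (inducedAssemblage ρ EA)
      ≤ ∑ x, ∑ a, ((F a x * ptraceA ρ).trace).re := hW1
  _ = (Fintype.card A : ℝ) * ((Fintype.card A : ℝ)⁻¹
        * ∑ x, ∑ a, ((F a x * ptraceA ρ).trace).re) := by
      rw [← mul_assoc, mul_inv_cancel₀ hcard.ne', one_mul]
  _ ≤ (Fintype.card A : ℝ) * steeringBound F :=
      mul_le_mul_of_nonneg_left hW2 hcard.le

lemma bddAbove_LVs_set [Nonempty A] {ι' : Type} [Fintype ι'] [DecidableEq ι']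
    {ρ : Matrix (ι' × ι) (ι' × ι) ℂ} (hρ : IsDensity ρ)
    {Bf : A → B → X → Y → ℝ} (hBf : ∀ a b x y, 0 ≤ Bf a b x y)
    {EB : B → Y → HMat ι} (hEB : IsPOVM EB)
    (hs : 0 < steeringBound (inducedF Bf EB)) :
    BddAbove {r : ℝ | ∃ E : A → X → HMat ι', IsPOVM E ∧
      r = steeringFraction (inducedAssemblage ρ E) (inducedF Bf EB)} := by
  refine ⟨(Fintype.card A : ℝ), fun r hr => ?_⟩
  obtain ⟨E, hE, rfl⟩ := hr
  exact induced_fraction_le_card hρ hBf hEB hs hE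

lemma LVs_le_card [Nonempty A] {ι' : Type} [Fintype ι'] [DecidableEq ι']
    {ρ : Matrix (ι' × ι) (ι' × ι) ℂ} (hρ : IsDensity ρ)
    {Bf : A → B → X → Y → ℝ} (hBf : ∀ a b x y, 0 ≤ Bf a b x y)
    {EB : B → Y → HMat ι} (hEB : IsPOVM EB)
    (hs : 0 < steeringBound (inducedF Bf EB)) :
    LVs ρ (inducedF Bf EB) ≤ (Fintype.card A : ℝ) := by
  refine Real.sSup_le (fun r hr => ?_) (Nat.cast_nonneg _)
  obtain ⟨E, hE, rfl⟩ := hr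
  exact induced_fraction_le_card hρ hBf hEB hs hE

end AuxHigh
/-- Theorem 6: the largest Bell-inequality violation is bounded by the
largest induced steering-inequality violation:
`LV(ρ, B) ≤ sup_{E_B} LV_s(ρ, F_(B;E_B))`. -/
theorem stmt18 {A B X Y : Type} [Fintype A] [Fintype B] [Fintype X] [Fintype Y]
    [Nonempty A] [Nonempty B] [Nonempty X] [Nonempty Y]
    (d : ℕ) (hd : 0 < d)
    (ρ : Matrix (Fin d × Fin d) (Fin d × Fin d) ℂ) (hρ : IsDensity ρ)
    (Bf : A → B → X → Y → ℝ) (hBf : ∀ a b x y, 0 ≤ Bf a b x y)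
    (hω : 0 < localBound Bf) :
    LV ρ Bf ≤
      sSup {r : ℝ | ∃ EB : B → Y → HMat (Fin d), IsPOVM EB ∧
        0 < steeringBound (inducedF Bf EB) ∧ r = LVs ρ (inducedF Bf EB)} := by
  classical
  obtain ⟨a0, b0, x0, y0, hpos⟩ := exists_pos_coeff hBf hω
  set Sset := {r : ℝ | ∃ EB : B → Y → HMat (Fin d), IsPOVM EB ∧
      0 < steeringBound (inducedF Bf EB) ∧ r = LVs ρ (inducedF Bf EB)} with hSset
  -- Bob's trivial deterministic POVM
  set EB0 : B → Y → HMat (Fin d) := fun b _ => if b = b0 then 1 else 0 with hEB0def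
  have hEB0 : IsPOVM EB0 := by
    refine ⟨fun b y => ?_, fun y => ?_⟩
    · by_cases h : b = b0 <;>
        simp [hEB0def, h, Matrix.PosSemidef.one, Matrix.PosSemidef.zero]
    · simp [hEB0def, Finset.sum_ite_eq', Finset.mem_univ]
  -- the maximally mixed state
  have hdne : (d : ℝ) ≠ 0 := Nat.cast_ne_zero.mpr hd.ne'
  set τ0 : HMat (Fin d) := ((d : ℝ)⁻¹) • (1 : HMat (Fin d)) with hτ0def
  have hτ0 : IsDensity τ0 := by
    refine ⟨psd_smul_real (by positivity) Matrix.PosSemidef.one, ?_⟩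
    rw [hτ0def, Matrix.trace_smul, Matrix.trace_one]
    rw [Complex.real_smul, Fintype.card_fin]
    push_cast
    rw [inv_mul_cancel₀ (by exact_mod_cast hdne)]
  have hτ0re : ((τ0.trace).re) = 1 := by rw [hτ0.2, Complex.one_re]
  -- the steering bound of the induced functional for EB0 is positive
  have hBdd0 := bddAbove_steeringBound_set_inducedF (ι := Fin d) (X := X) hBf hEB0
  have hs0 : 0 < steeringBound (inducedF Bf EB0) := by
    set σ0 : A → X → HMat (Fin d) := fun a _ => if a = a0 then τ0 else 0 with hσ0def
    have hassem : IsAssemblage σ0 := by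
      refine ⟨fun a x => ?_, fun x x' => rfl, fun x => ?_⟩
      · by_cases h : a = a0 <;> simp [hσ0def, h, hτ0.1, Matrix.PosSemidef.zero]
      · simp only [hσ0def, Finset.sum_ite_eq', Finset.mem_univ, if_true]
        exact hτ0.2
    have hunst : IsUnsteerable σ0 := by
      refine ⟨1, fun _ => 1, fun a _ _ => if a = a0 then 1 else 0, fun _ => τ0,
        fun _ => zero_le_one, by simp, fun a _ _ => by positivity, fun _ _ => by
          simp [Finset.sum_ite_eq', Finset.mem_univ], fun _ => hτ0, fun a x => by
          by_cases h : a = a0 <;> simp [hσ0def, h]⟩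
    have hval : steeringValue (inducedF Bf EB0) σ0 = ∑ x, ∑ y, Bf a0 b0 x y := by
      unfold steeringValue
      refine Finset.sum_congr rfl fun x _ => ?_
      have h1 : ∀ a : A, (((inducedF Bf EB0 a x) * (σ0 a x)).trace).re
          = if a = a0 then (((inducedF Bf EB0 a x) * τ0).trace).re else 0 := by
        intro a
        by_cases h : a = a0 <;> simp [hσ0def, h]
      simp only [h1, Finset.sum_ite_eq', Finset.mem_univ, if_true]
      rw [inducedF_mul_trace_re]
      refine Finset.sum_congr rfl fun y _ => ?_
      have h2 : ∀ b : B, Bf a0 b x y * (((EB0 b y) * τ0).trace).re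
          = if b = b0 then Bf a0 b x y * ((τ0.trace).re) else 0 := by
        intro b
        by_cases h : b = b0 <;> simp [hEB0def, h]
      rw [Finset.sum_congr rfl fun b _ => h2 b]
      simp [Finset.sum_ite_eq', Finset.mem_univ, hτ0re]
    have hge : steeringValue (inducedF Bf EB0) σ0 ≤ steeringBound (inducedF Bf EB0) :=
      le_csSup hBdd0 ⟨σ0, hassem, hunst, rfl⟩
    have hposval : 0 < ∑ x, ∑ y, Bf a0 b0 x y := by
      have h3 : Bf a0 b0 x0 y0 ≤ ∑ x, ∑ y, Bf a0 b0 x y := by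
        calc Bf a0 b0 x0 y0 ≤ ∑ y, Bf a0 b0 x0 y :=
          Finset.single_le_sum (fun y _ => hBf a0 b0 x0 y) (Finset.mem_univ y0)
        _ ≤ ∑ x, ∑ y, Bf a0 b0 x y :=
          Finset.single_le_sum (fun x _ => Finset.sum_nonneg fun y _ => hBf a0 b0 x y)
            (Finset.mem_univ x0)
      linarith
    rw [hval] at hge
    linarith
  -- the RHS set is bounded above
  have hSbdd : BddAbove Sset := by
    refine ⟨(Fintype.card A : ℝ), fun r hr => ?_⟩
    obtain ⟨EB', hEB', hs', rfl⟩ := hr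
    exact LVs_le_card hρ hBf hEB' hs'
  -- the RHS sup is nonnegative
  have hS0 : 0 ≤ sSup Sset := by
    set EA0 : A → X → HMat (Fin d) := fun a _ => if a = a0 then 1 else 0 with hEA0def
    have hEA0 : IsPOVM EA0 := by
      refine ⟨fun a x => ?_, fun x => ?_⟩
      · by_cases h : a = a0 <;>
          simp [hEA0def, h, Matrix.PosSemidef.one, Matrix.PosSemidef.zero]
      · simp [hEA0def, Finset.sum_ite_eq', Finset.mem_univ]
    have hF0psd : ∀ a x, (inducedF Bf EB0 a x).PosSemidef := inducedF_psd Bf hBf hEB0.1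
    have hfrac0 : 0 ≤ steeringFraction (inducedAssemblage ρ EA0) (inducedF Bf EB0) := by
      refine div_nonneg ?_ hs0.le
      exact steeringValue_nonneg hF0psd fun a x => inducedAssemblage_psd hρ.1 hEA0.1 a x
    have hLVs0 : 0 ≤ LVs ρ (inducedF Bf EB0) :=
      le_trans hfrac0 (le_csSup (bddAbove_LVs_set hρ hBf hEB0 hs0) ⟨EA0, hEA0, rfl⟩)
    exact le_trans hLVs0 (le_csSup hSbdd ⟨EB0, hEB0, hs0, rfl⟩)
  -- main bound
  refine Real.sSup_le (fun r hr => ?_) hS0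
  obtain ⟨EA, EB, hEA, hEB, rfl⟩ := hr
  have hFpsd : ∀ a x, (inducedF Bf EB a x).PosSemidef := inducedF_psd Bf hBf hEB.1
  have hσpsd : ∀ a x, (inducedAssemblage ρ EA a x).PosSemidef :=
    fun a x => inducedAssemblage_psd hρ.1 hEA.1 a x
  have hVeq : steeringValue (inducedF Bf EB) (inducedAssemblage ρ EA)
      = bellValue Bf (quantumCorr ρ EA EB) := steeringValue_inducedF ρ Bf EA EB
  have hV0 : 0 ≤ bellValue Bf (quantumCorr ρ EA EB) := by
    rw [← hVeq]; exact steeringValue_nonneg hFpsd hσpsd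
  rcases lt_or_ge 0 (steeringBound (inducedF Bf EB)) with hs | hs
  · have hsω : steeringBound (inducedF Bf EB) ≤ localBound Bf :=
      steeringBound_le_localBound hBf hω.le hEB
    have h1 : nonlocalityFraction (quantumCorr ρ EA EB) Bf
        ≤ bellValue Bf (quantumCorr ρ EA EB) / steeringBound (inducedF Bf EB) := by
      unfold nonlocalityFraction
      exact div_le_div_of_nonneg_left hV0 hs hsω
    have h2 : bellValue Bf (quantumCorr ρ EA EB) / steeringBound (inducedF Bf EB)
        = steeringFraction (inducedAssemblage ρ EA) (inducedF Bf EB) := by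
      rw [steeringFraction, hVeq]
    have h3 : steeringFraction (inducedAssemblage ρ EA) (inducedF Bf EB)
        ≤ LVs ρ (inducedF Bf EB) :=
      le_csSup (bddAbove_LVs_set hρ hBf hEB hs) ⟨EA, hEA, rfl⟩
    have h4 : LVs ρ (inducedF Bf EB) ≤ sSup Sset := le_csSup hSbdd ⟨EB, hEB, hs, rfl⟩
    rw [h2] at h1
    exact le_trans h1 (le_trans h3 h4)
  · have hW2 := uniform_le_steeringBound (inducedF Bf EB) (ptraceA_density hρ)
      (bddAbove_steeringBound_set_inducedF hBf hEB)
    have hWnn : 0 ≤ ∑ x, ∑ a, (((inducedF Bf EB a x) * ptraceA ρ).trace).re :=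
      Finset.sum_nonneg fun x _ => Finset.sum_nonneg fun a _ =>
        trace_mul_re_nonneg (hFpsd a x) (ptraceA_posSemidef hρ.1)
    have hcard : (0 : ℝ) < (Fintype.card A : ℝ)⁻¹ := by
      have : (0 : ℝ) < (Fintype.card A : ℝ) := by exact_mod_cast Fintype.card_pos
      positivity
    have hW0 : ∑ x, ∑ a, (((inducedF Bf EB a x) * ptraceA ρ).trace).re ≤ 0 := by
      nlinarith
    have hVle : bellValue Bf (quantumCorr ρ EA EB) ≤ 0 := by
      rw [← hVeq]
      exact le_trans (steeringValue_induced_le_W hρ.1 hEA hFpsd) hW0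
    have hVzero : bellValue Bf (quantumCorr ρ EA EB) = 0 := le_antisymm hVle hV0
    unfold nonlocalityFraction
    rw [hVzero, zero_div]
    exact hS0

end QSteer

end
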